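/- Let C be a finite nonempty set of points in ℝ^d and let P be a finite set of points in ℝ^d with cost(P,C) > 0. If a random point c ∈ P is chosen with probability Pr(c = x) = cost(x,C)/cost(P,C), then the expected cost of P with the enlarged center set satisfies Σ_{x∈P} (cost(x,C)/cost(P,C)) · cost(P, C ∪ {x}) ≤ 5 · OPT_1(P). -/

import Mathlib

open Finset
open scoped Classical

/-- `ptCost x C` is `cost(x, C) = min_{c ∈ C} ‖x - c‖²`. -/
noncomputable def ptCost {d : ℕ} (x : EuclideanSpace ℝ (Fin d))
    (C : Finset (EuclideanSpace ℝ (Fin d))) : ℝ :=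
  sInf ((fun c => ‖x - c‖ ^ 2) '' (C : Set (EuclideanSpace ℝ (Fin d))))

/-- `setCost Y C` is `cost(Y, C) = Σ_{x ∈ Y} cost(x, C)`. -/
noncomputable def setCost {d : ℕ} (Y C : Finset (EuclideanSpace ℝ (Fin d))) : ℝ :=
  ∑ x ∈ Y, ptCost x C

/-- The centroid `μ = (Σ_{y ∈ Y} y) / |Y|` of a finite set. -/
noncomputable def centroid {d : ℕ} (Y : Finset (EuclideanSpace ℝ (Fin d))) :
    EuclideanSpace ℝ (Fin d) :=
  (Y.card : ℝ)⁻¹ • ∑ y ∈ Y, y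

/-- `opt1 Y = OPT₁(Y) = Σ_{y ∈ Y} ‖y - μ‖²`. -/
noncomputable def opt1 {d : ℕ} (Y : Finset (EuclideanSpace ℝ (Fin d))) : ℝ :=
  ∑ y ∈ Y, ‖y - centroid Y‖ ^ 2

set_option maxHeartbeats 1000000

section ScalarLemmas

private lemma caseA (lam rho sig : ℝ) (h0 : 0 ≤ rho) (h1 : rho ≤ lam) (h2 : rho ≤ sig) :
    3*rho^2*(lam+sig)^2 + rho^2*(lam-rho)*(lam+3*rho) ≤ 4*sig^2*(lam*(lam+2*rho)) := by
  have hl : 0 ≤ lam := le_trans h0 h1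
  have hsr : 0 ≤ sig - rho := sub_nonneg.2 h2
  have hlr : 0 ≤ lam - rho := sub_nonneg.2 h1
  nlinarith [sq_nonneg (sig - rho), mul_nonneg (mul_nonneg hsr h0) hl,
    sq_nonneg (sig*lam - rho*lam), mul_nonneg (mul_nonneg hsr hlr) hl,
    mul_nonneg (mul_nonneg hsr hsr) hl, mul_nonneg (mul_nonneg hsr hlr) h0,
    mul_nonneg (mul_nonneg hsr hsr) h0, mul_nonneg (mul_nonneg h0 h0) hlr,
    mul_nonneg (mul_nonneg hsr h0) h0, sq_nonneg (lam - rho), sq_nonneg lam]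

private lemma caseB (lam rho sig : ℝ) (h0 : 0 ≤ sig) (h2 : sig ≤ rho) (h1 : rho ≤ lam) :
    (sig^2*(lam*(lam+2*rho)) - rho^2*(lam-rho)*(lam+3*rho))*(lam+sig)^2
      + rho^2*(lam-rho)*(lam+3*rho)*rho^2 - 4*rho^2*sig^2*(lam*(lam+2*rho)) ≤ 0 := by
  have hr : 0 ≤ rho := le_trans h0 h2
  have hl : 0 ≤ lam := le_trans hr h1
  have hrs : 0 ≤ rho - sig := sub_nonneg.2 h2
  have hlr : 0 ≤ lam - rho := sub_nonneg.2 h1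
  have hq : 0 ≤ lam^3+5*lam^2*rho+5*lam*rho^2-3*rho^3 := by
    nlinarith [mul_nonneg (mul_nonneg hr hr) hlr]
  have t0 : 0 ≤ (rho-sig)*(rho*(lam-rho)^2*((lam+rho)*(lam+3*rho))) :=
    mul_nonneg hrs (mul_nonneg (mul_nonneg hr (sq_nonneg _))
      (mul_nonneg (by linarith) (by linarith)))
  have t1 : 0 ≤ (rho-sig)*(sig*((lam-rho)*(lam^3+5*lam^2*rho+5*lam*rho^2-3*rho^3))) :=
    mul_nonneg hrs (mul_nonneg h0 (mul_nonneg hlr hq))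
  have t2 : 0 ≤ (rho-sig)*(sig^2*(2*lam^3+5*lam^2*rho+2*lam*rho^2)) :=
    mul_nonneg hrs (mul_nonneg (sq_nonneg _)
      (by nlinarith [mul_nonneg (mul_nonneg hl hl) hl, mul_nonneg (mul_nonneg hl hl) hr,
        mul_nonneg (mul_nonneg hl hr) hr]))
  have t3 : 0 ≤ (rho-sig)*(sig^3*(lam^2+2*lam*rho)) :=
    mul_nonneg hrs (mul_nonneg (by positivity) (by nlinarith [sq_nonneg lam, mul_nonneg hl hr]))
  nlinarith [t0, t1, t2, t3]

private lemma caseC (lam rho sig : ℝ) (h0 : 0 ≤ sig) (h2 : sig ≤ rho) (h1 : rho ≤ lam)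
    (hT : sig^2*(lam*(lam+2*rho)) ≤ rho^2*(lam-rho)*(lam+3*rho)) :
    (sig^2*(lam*(lam+2*rho)) - rho^2*(lam-rho)*(lam+3*rho))*(lam-sig)^2
      + rho^2*(lam-rho)*(lam+3*rho)*rho^2 - 4*rho^2*sig^2*(lam*(lam+2*rho)) ≤ 0 := by
  have hr : 0 ≤ rho := le_trans h0 h2
  have hl : 0 ≤ lam := le_trans hr h1
  have hKA : 0 ≤ rho^2*(lam-rho)*(lam+3*rho) - sig^2*(lam*(lam+2*rho)) := sub_nonneg.2 hT
  have hA : 0 ≤ sig^2*(lam*(lam+2*rho)) := by positivity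
  have hK : 0 ≤ rho^2*(lam-rho)*(lam+3*rho) := by
    have : 0 ≤ lam - rho := by linarith
    positivity
  rcases le_or_gt sig (lam - rho) with hc | hc
  · have h3 : rho ^ 2 ≤ (lam - sig)^2 := by nlinarith
    nlinarith [mul_nonneg hKA (sub_nonneg.2 h3), mul_nonneg (mul_nonneg hr hr) hA]
  · have h4 : 0 ≤ (sig-(lam-rho)) := by linarith
    have h5 : 0 ≤ (lam+rho-sig) := by linarith
    have s1 : rho^2*(lam-rho)*(lam+3*rho)*((sig-(lam-rho))*(lam+rho-sig))
        ≤ rho^2*(lam-rho)*(lam+3*rho)*(sig*(lam+rho)) := by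
      apply mul_le_mul_of_nonneg_left _ hK
      nlinarith [mul_nonneg h0 h0, mul_nonneg (sub_nonneg.2 h1) h0,
        mul_nonneg (sub_nonneg.2 h1) (sub_nonneg.2 h1), mul_nonneg h4 h0]
    have s2 : rho^2*(lam-rho)*(lam+3*rho)*(sig*(lam+rho))
        ≤ rho^2*(sig^2*((lam+3*rho)*(lam+rho))) := by
      nlinarith [mul_nonneg (mul_nonneg (mul_nonneg hr hr) h0)
        (mul_nonneg (by linarith : (0:ℝ) ≤ lam+3*rho) (by linarith : (0:ℝ) ≤ lam+rho)), h4]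
    have s3 : rho^2*(sig^2*((lam+3*rho)*(lam+rho))) ≤ 3*rho^2*(sig^2*(lam*(lam+2*rho))) := by
      have h6 : (lam+3*rho)*(lam+rho) ≤ 3*(lam*(lam+2*rho)) := by
        nlinarith [mul_nonneg (sub_nonneg.2 h1) hr, sq_nonneg lam]
      nlinarith [mul_nonneg (mul_nonneg hr hr) (mul_nonneg h0 h0), h6]
    nlinarith [le_trans s1 (le_trans s2 s3), mul_nonneg hA (mul_nonneg h4 h5),
      mul_nonneg (mul_nonneg hr hr) hA]

private lemma key_point (lam rho sig D : ℝ) (hr0 : 0 ≤ rho) (hrl : rho ≤ lam)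
    (hs : 0 ≤ sig) (hD : 0 ≤ D) (hup : D ≤ lam + sig) (hlow : lam ≤ D + sig) :
    ((min sig rho)^2*(lam*(lam+2*rho)) - rho^2*(lam-rho)*(lam+3*rho)) * D^2
      ≤ 4*rho^2*sig^2*(lam*(lam+2*rho)) - rho^2*(lam-rho)*(lam+3*rho)*rho^2 := by
  have hl : 0 ≤ lam := le_trans hr0 hrl
  have hD2 : D^2 ≤ (lam+sig)^2 := by nlinarith
  rcases le_total rho sig with hc | hc
  · rw [min_eq_right hc]
    have hco : rho^2*(lam*(lam+2*rho)) - rho^2*(lam-rho)*(lam+3*rho) = 3*rho^4 := by ring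
    rw [hco]
    have h3 : 3*rho^4 * D^2 ≤ 3*rho^4*(lam+sig)^2 :=
      mul_le_mul_of_nonneg_left hD2 (by positivity)
    refine le_trans h3 ?_
    nlinarith [mul_le_mul_of_nonneg_left (caseA lam rho sig hr0 hrl hc) (sq_nonneg rho)]
  · rw [min_eq_left hc]
    rcases le_total (rho^2*(lam-rho)*(lam+3*rho)) (sig^2*(lam*(lam+2*rho))) with hT | hT
    · have hcoef : 0 ≤ sig^2*(lam*(lam+2*rho)) - rho^2*(lam-rho)*(lam+3*rho) := sub_nonneg.2 hT
      nlinarith [caseB lam rho sig hs hc hrl, mul_le_mul_of_nonneg_left hD2 hcoef]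
    · have hls : 0 ≤ lam - sig := by linarith
      have hD2' : (lam-sig)^2 ≤ D^2 := by nlinarith
      have hcoef : sig^2*(lam*(lam+2*rho)) - rho^2*(lam-rho)*(lam+3*rho) ≤ 0 := sub_nonpos.2 hT
      nlinarith [caseC lam rho sig hs hc hrl hT, mul_le_mul_of_nonpos_left hD2' hcoef]

private lemma min_sq (a b : ℝ) (ha : 0 ≤ a) (hb : 0 ≤ b) : (min a b)^2 = min (a^2) (b^2) := by
  rcases le_total a b with h | h
  · rw [min_eq_left h, min_eq_left (by nlinarith)]
  · rw [min_eq_right h, min_eq_right (by nlinarith)]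

private lemma sum_scalar {ι : Type*} (P : Finset ι) (sig D : ι → ℝ) (lam rho : ℝ)
    (hs : ∀ x ∈ P, 0 ≤ sig x) (hD : ∀ x ∈ P, 0 ≤ D x)
    (hup : ∀ x ∈ P, D x ≤ lam + sig x) (hlow : ∀ x ∈ P, lam ≤ D x + sig x)
    (hr0 : 0 ≤ rho) (hcard : (P.card : ℝ) * rho^2 = ∑ x ∈ P, D x^2) :
    ∑ x ∈ P, D x^2 * min (rho^2) (sig x ^2) ≤ 4 * rho^2 * ∑ x ∈ P, sig x^2 := by
  rcases le_or_gt lam rho with hlr | hrl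
  · rw [mul_sum]
    refine sum_le_sum (fun x hx => ?_)
    have h1 := hs x hx; have h2 := hD x hx; have h3 := hup x hx
    have h4 : D x ≤ rho + sig x := by linarith
    rcases le_total (rho^2) (sig x^2) with hc | hc
    · rw [min_eq_left hc]
      have hsr : rho ≤ sig x := by nlinarith
      have hD4 : D x^2 ≤ 4*sig x^2 := by nlinarith
      nlinarith [mul_le_mul_of_nonneg_right hD4 (sq_nonneg rho)]
    · rw [min_eq_right hc]
      have hsr : sig x ≤ rho := by nlinarith
      have hD4 : D x^2 ≤ 4*rho^2 := by nlinarith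
      nlinarith [mul_le_mul_of_nonneg_right hD4 (sq_nonneg (sig x))]
  · have hl0 : 0 < lam := lt_of_le_of_lt hr0 hrl
    have hL : 0 < lam*(lam+2*rho) := by nlinarith
    have key : ∀ x ∈ P, ((min (sig x) rho)^2*(lam*(lam+2*rho)) - rho^2*(lam-rho)*(lam+3*rho)) * D x^2
        ≤ 4*rho^2*(sig x)^2*(lam*(lam+2*rho)) - rho^2*(lam-rho)*(lam+3*rho)*rho^2 :=
      fun x hx => key_point lam rho (sig x) (D x) hr0 hrl.le (hs x hx) (hD x hx) (hup x hx) (hlow x hx)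
    have hsum := sum_le_sum key
    have hmin : ∀ x ∈ P, (min (sig x) rho)^2 = min (rho^2) (sig x^2) := by
      intro x hx
      rw [min_sq _ _ (hs x hx) hr0, min_comm]
    have e1 : ∑ x ∈ P, ((min (sig x) rho)^2*(lam*(lam+2*rho)) - rho^2*(lam-rho)*(lam+3*rho)) * D x^2
        = (lam*(lam+2*rho)) * (∑ x ∈ P, D x^2 * min (rho^2) (sig x^2))
          - rho^2*(lam-rho)*(lam+3*rho) * (∑ x ∈ P, D x ^2) := by
      rw [mul_sum, mul_sum, ← sum_sub_distrib]
      refine sum_congr rfl (fun x hx => ?_)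
      rw [hmin x hx]; ring
    have e2 : ∑ x ∈ P, (4*rho^2*(sig x)^2*(lam*(lam+2*rho)) - rho^2*(lam-rho)*(lam+3*rho)*rho^2)
        = (lam*(lam+2*rho)) * (4*rho^2 * ∑ x ∈ P, sig x^2)
          - rho^2*(lam-rho)*(lam+3*rho) * ((P.card : ℝ) * rho^2) := by
      rw [sum_sub_distrib, sum_const, mul_sum, mul_sum, nsmul_eq_mul]
      ring_nf
      congr 1
      · refine sum_congr rfl (fun x hx => by ring)
    rw [e1, e2, hcard] at hsum
    have h2 : (lam*(lam+2*rho)) * (∑ x ∈ P, D x^2 * min (rho^2) (sig x^2))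
        ≤ (lam*(lam+2*rho)) * (4*rho^2 * ∑ x ∈ P, sig x^2) := by linarith
    exact le_of_mul_le_mul_left h2 hL

private lemma scalar_main {ι : Type*} (P : Finset ι) (sig D : ι → ℝ) (lam : ℝ)
    (hs : ∀ x ∈ P, 0 ≤ sig x) (hD : ∀ x ∈ P, 0 ≤ D x)
    (hup : ∀ x ∈ P, D x ≤ lam + sig x) (hlow : ∀ x ∈ P, lam ≤ D x + sig x) :
    ∑ x ∈ P, D x^2 * min (∑ y ∈ P, D y^2) ((P.card : ℝ) * sig x^2 + ∑ y ∈ P, sig y^2)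
      ≤ 5 * (∑ y ∈ P, sig y^2) * (∑ y ∈ P, D y^2) := by
  rcases P.eq_empty_or_nonempty with rfl | hne
  · simp
  set S := ∑ y ∈ P, D y^2 with hS
  set O := ∑ y ∈ P, sig y^2 with hO
  have hS0 : 0 ≤ S := sum_nonneg (fun y hy => sq_nonneg _)
  have hO0 : 0 ≤ O := sum_nonneg (fun y hy => sq_nonneg _)
  have hn0 : 0 < (P.card : ℝ) := by exact_mod_cast card_pos.2 hne
  set rho := Real.sqrt (S / P.card) with hrho
  have hr0 : 0 ≤ rho := Real.sqrt_nonneg _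
  have hrsq : rho^2 = S / P.card := Real.sq_sqrt (by positivity)
  have hcard : (P.card : ℝ) * rho^2 = S := by
    rw [hrsq]; field_simp
  have hterm : ∀ x ∈ P, D x^2 * min S ((P.card : ℝ) * sig x^2 + O)
      ≤ D x^2 * ((P.card : ℝ) * min (rho^2) (sig x^2)) + D x^2 * O := by
    intro x hx
    have h1 : min S ((P.card : ℝ) * sig x^2 + O) ≤ (P.card : ℝ) * min (rho^2) (sig x^2) + O := by
      rcases le_total (rho^2) (sig x^2) with hc | hc
      · rw [min_eq_left hc]
        have h2 := min_le_left S ((P.card : ℝ) * sig x^2 + O)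
        linarith [hcard]
      · rw [min_eq_right hc]
        have h2 := min_le_right S ((P.card : ℝ) * sig x^2 + O)
        linarith
    have h3 := mul_le_mul_of_nonneg_left h1 (sq_nonneg (D x))
    nlinarith [h3]
  calc ∑ x ∈ P, D x^2 * min S ((P.card : ℝ) * sig x^2 + O)
      ≤ ∑ x ∈ P, (D x^2 * ((P.card : ℝ) * min (rho^2) (sig x^2)) + D x^2 * O) :=
        sum_le_sum hterm
    _ = (P.card : ℝ) * (∑ x ∈ P, D x^2 * min (rho^2) (sig x^2)) + O * S := by
        rw [sum_add_distrib, mul_sum, ← sum_mul]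
        congr 1
        · exact sum_congr rfl (fun x hx => by ring)
        · rw [mul_comm]
    _ ≤ (P.card : ℝ) * (4 * rho^2 * O) + O * S := by
        have h4 := sum_scalar P sig D lam rho hs hD hup hlow hr0 hcard
        have h5 := mul_le_mul_of_nonneg_left h4 hn0.le
        linarith
    _ = 4 * ((P.card : ℝ) * rho^2) * O + O * S := by ring
    _ = 5 * O * S := by rw [hcard]; ring

end ScalarLemmas

section GeomLemmas

variable {d : ℕ}

private lemma ptCost_nonneg (x : EuclideanSpace ℝ (Fin d)) (C : Finset (EuclideanSpace ℝ (Fin d))) :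
    0 ≤ ptCost x C := by
  apply Real.sInf_nonneg
  rintro v ⟨c, hc, rfl⟩
  positivity

private lemma ptCost_le (x c : EuclideanSpace ℝ (Fin d)) {C : Finset (EuclideanSpace ℝ (Fin d))}
    (hc : c ∈ C) : ptCost x C ≤ ‖x - c‖ ^ 2 := by
  apply csInf_le
  · exact (Set.Finite.image _ C.finite_toSet).bddBelow
  · exact ⟨c, by exact_mod_cast hc, rfl⟩

private lemma ptCost_exists (x : EuclideanSpace ℝ (Fin d)) {C : Finset (EuclideanSpace ℝ (Fin d))}
    (hC : C.Nonempty) : ∃ c ∈ C, ptCost x C = ‖x - c‖ ^ 2 := by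
  have hne : ((fun c => ‖x - c‖ ^ 2) '' (C : Set (EuclideanSpace ℝ (Fin d)))).Nonempty := by
    obtain ⟨c, hc⟩ := hC
    exact ⟨_, ⟨c, by exact_mod_cast hc, rfl⟩⟩
  have hfin : ((fun c => ‖x - c‖ ^ 2) '' (C : Set (EuclideanSpace ℝ (Fin d)))).Finite :=
    Set.Finite.image _ C.finite_toSet
  obtain ⟨c, hc, hv⟩ := hne.csInf_mem hfin
  exact ⟨c, by exact_mod_cast hc, hv.symm⟩

private lemma ptCost_insert_le_self (x y : EuclideanSpace ℝ (Fin d))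
    {C : Finset (EuclideanSpace ℝ (Fin d))} (hC : C.Nonempty) :
    ptCost y (insert x C) ≤ ptCost y C := by
  apply csInf_le_csInf
  · exact (Set.Finite.image _ (insert x C).finite_toSet).bddBelow
  · obtain ⟨c, hc⟩ := hC
    exact ⟨_, ⟨c, by exact_mod_cast hc, rfl⟩⟩
  · apply Set.image_mono
    intro c hc
    simp only [coe_insert, Set.mem_insert_iff]
    right; exact_mod_cast hc

private lemma ptCost_insert_le (x y : EuclideanSpace ℝ (Fin d))
    (C : Finset (EuclideanSpace ℝ (Fin d))) :
    ptCost y (insert x C) ≤ ‖y - x‖ ^ 2 :=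
  ptCost_le y x (mem_insert_self x C)

private lemma sum_dist_sq (P : Finset (EuclideanSpace ℝ (Fin d))) (hne : P.Nonempty)
    (x : EuclideanSpace ℝ (Fin d)) :
    ∑ y ∈ P, ‖y - x‖ ^ 2 = (P.card : ℝ) * ‖x - centroid P‖ ^ 2 + opt1 P := by
  set μ := centroid P with hμ
  have hn0 : (P.card : ℝ) ≠ 0 := by
    have := card_pos.2 hne
    positivity
  have hsum : ∑ y ∈ P, (y - μ) = 0 := by
    rw [sum_sub_distrib, sum_const, hμ]
    show (∑ y ∈ P, y) - P.card • ((P.card : ℝ)⁻¹ • ∑ y ∈ P, y) = 0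
    rw [← Nat.cast_smul_eq_nsmul ℝ, smul_smul]
    rw [mul_inv_cancel₀ hn0, one_smul, sub_self]
  have hexp : ∀ y ∈ P, ‖y - x‖ ^ 2
      = ‖y - μ‖ ^ 2 - 2 * (inner ℝ (y - μ) (x - μ) : ℝ) + ‖x - μ‖ ^ 2 := by
    intro y hy
    have h7 : y - x = (y - μ) - (x - μ) := by abel
    rw [h7, @norm_sub_sq_real]
  rw [sum_congr rfl hexp]
  rw [sum_add_distrib, sum_sub_distrib, sum_const, nsmul_eq_mul]
  have hinner : ∑ y ∈ P, 2 * (inner ℝ (y - μ) (x - μ) : ℝ)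
      = 2 * (inner ℝ (∑ y ∈ P, (y - μ)) (x - μ) : ℝ) := by
    rw [sum_inner]; rw [mul_sum]
  rw [hinner, hsum, inner_zero_left, mul_zero, sub_zero, opt1]
  ring

end GeomLemmas

/-- If a random point `c ∈ P` is chosen with probability `cost(c,C)/cost(P,C)`, then the
expected cost of `P` with the enlarged center set `C ∪ {c}` is at most `5 · OPT₁(P)`. -/
theorem expected_cost_of_covered_cluster {d : ℕ}
    (C P : Finset (EuclideanSpace ℝ (Fin d))) (hC : C.Nonempty)
    (hP : 0 < setCost P C) :
    ∑ x ∈ P, (ptCost x C / setCost P C) * setCost P (insert x C) ≤ 5 * opt1 P := by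
  have hPne : P.Nonempty := by
    rcases P.eq_empty_or_nonempty with rfl | h
    · simp [setCost] at hP
    · exact h
  set μ := centroid P with hμ
  set lam := Real.sqrt (ptCost μ C) with hlam
  set Df : EuclideanSpace ℝ (Fin d) → ℝ := fun y => Real.sqrt (ptCost y C) with hDf
  set sig : EuclideanSpace ℝ (Fin d) → ℝ := fun y => ‖y - μ‖ with hsig
  have hD2 : ∀ y, Df y ^ 2 = ptCost y C := fun y => Real.sq_sqrt (ptCost_nonneg y C)
  obtain ⟨cm, hcm, hcmeq⟩ := ptCost_exists μ hC
  have hlam_eq : lam = ‖μ - cm‖ := by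
    rw [hlam, hcmeq, Real.sqrt_sq (norm_nonneg _)]
  have hup : ∀ y ∈ P, Df y ≤ lam + sig y := by
    intro y hy
    have h1 : ptCost y C ≤ ‖y - cm‖ ^ 2 := ptCost_le y cm hcm
    have h2 : Df y ≤ ‖y - cm‖ := by
      rw [hDf]
      calc Real.sqrt (ptCost y C) ≤ Real.sqrt (‖y - cm‖ ^ 2) := Real.sqrt_le_sqrt h1
        _ = ‖y - cm‖ := Real.sqrt_sq (norm_nonneg _)
    have h3 : ‖y - cm‖ ≤ ‖y - μ‖ + ‖μ - cm‖ := by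
      have h4 : y - cm = (y - μ) + (μ - cm) := by abel
      rw [h4]; exact norm_add_le _ _
    rw [hlam_eq]
    simp only [hsig]
    linarith
  have hlow : ∀ y ∈ P, lam ≤ Df y + sig y := by
    intro y hy
    obtain ⟨c, hc, hceq⟩ := ptCost_exists y hC
    have h1 : lam ≤ ‖μ - c‖ := by
      rw [hlam]
      calc Real.sqrt (ptCost μ C) ≤ Real.sqrt (‖μ - c‖ ^ 2) :=
            Real.sqrt_le_sqrt (ptCost_le μ c hc)
        _ = ‖μ - c‖ := Real.sqrt_sq (norm_nonneg _)
    have h2 : ‖μ - c‖ ≤ ‖μ - y‖ + ‖y - c‖ := by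
      have h4 : μ - c = (μ - y) + (y - c) := by abel
      rw [h4]; exact norm_add_le _ _
    have h5 : ‖y - c‖ = Df y := by
      rw [hDf]
      simp only
      rw [hceq, Real.sqrt_sq (norm_nonneg _)]
    have h6 : ‖μ - y‖ = sig y := by rw [hsig]; simp only [norm_sub_rev]
    linarith [h1, h2, h5.le, h6.le]
  have hcost : ∀ x ∈ P, setCost P (insert x C)
      ≤ min (setCost P C) ((P.card : ℝ) * sig x ^ 2 + opt1 P) := by
    intro x hx
    refine le_min ?_ ?_
    · exact sum_le_sum (fun y hy => ptCost_insert_le_self x y hC)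
    · calc setCost P (insert x C) ≤ ∑ y ∈ P, ‖y - x‖ ^ 2 :=
            sum_le_sum (fun y hy => ptCost_insert_le x y C)
        _ = (P.card : ℝ) * ‖x - μ‖ ^ 2 + opt1 P := sum_dist_sq P hPne x
        _ = (P.card : ℝ) * sig x ^ 2 + opt1 P := rfl
  have hSeq : ∑ y ∈ P, Df y ^ 2 = setCost P C := by
    rw [setCost]; exact sum_congr rfl (fun y hy => hD2 y)
  have hOeq : ∑ y ∈ P, sig y ^ 2 = opt1 P := by
    rw [opt1]
  have main := scalar_main P sig Df lam (fun x _ => norm_nonneg _)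
    (fun x _ => Real.sqrt_nonneg _) hup hlow
  rw [hSeq, hOeq] at main
  have step1 : ∑ x ∈ P, (ptCost x C / setCost P C) * setCost P (insert x C)
      ≤ ∑ x ∈ P, (ptCost x C / setCost P C)
          * min (setCost P C) ((P.card : ℝ) * sig x ^ 2 + opt1 P) :=
    sum_le_sum (fun x hx => mul_le_mul_of_nonneg_left (hcost x hx)
      (div_nonneg (ptCost_nonneg _ _) hP.le))
  have step2 : ∑ x ∈ P, (ptCost x C / setCost P C)
        * min (setCost P C) ((P.card : ℝ) * sig x ^ 2 + opt1 P)
      = (∑ x ∈ P, Df x ^ 2 * min (setCost P C) ((P.card : ℝ) * sig x ^ 2 + opt1 P))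
          / setCost P C := by
    rw [sum_div]
    exact sum_congr rfl (fun x hx => by rw [hD2 x]; ring)
  have step3 : (∑ x ∈ P, Df x ^ 2 * min (setCost P C) ((P.card : ℝ) * sig x ^ 2 + opt1 P))
      / setCost P C ≤ (5 * opt1 P * setCost P C) / setCost P C := by
    apply div_le_div_of_nonneg_right main hP.le
  have step4 : (5 * opt1 P * setCost P C) / setCost P C = 5 * opt1 P := by
    field_simp
  linarith [step1, step2.le, step2.ge, step3, step4.le]
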